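/- With the attribute setup below, assume the family v is pairwise orthogonal and all vectors v(i,j) have the same norm c. Then for every i ∈ {1,…,l} and j ∈ {1,…,l'}, the centered base-concept representations from the two different attributes are exactly orthogonal: ⟨u_i, u'_j⟩ = 0. (This is the exact, idealized form of the statement that base-concept representations from different attributes are orthogonal.) -/

import Mathlib

open scoped InnerProductSpace
open Finset

theorem stmt_5
    {d l l' : ℕ} (hd : 1 ≤ d) (hl : 1 ≤ l) (hl' : 1 ≤ l')
    (σ : ℝ) (hσ : 0 < σ)
    (v : Fin l → Fin l' → EuclideanSpace ℝ (Fin d))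
    (vhat : Fin l → EuclideanSpace ℝ (Fin d))
    (vhat' : Fin l' → EuclideanSpace ℝ (Fin d))
    (μ : EuclideanSpace ℝ (Fin d))
    (u : Fin l → EuclideanSpace ℝ (Fin d))
    (u' : Fin l' → EuclideanSpace ℝ (Fin d))
    (hvhat : ∀ i, vhat i = (1 / (l' : ℝ)) • ∑ j, v i j)
    (hvhat' : ∀ j, vhat' j = (1 / (l : ℝ)) • ∑ i, v i j)
    (hμ : μ = (1 / ((l : ℝ) * (l' : ℝ))) • ∑ i, ∑ j, v i j)
    (hu : ∀ i, u i = (1 / σ) • (vhat i - μ))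
    (hu' : ∀ j, u' j = (1 / σ) • (vhat' j - μ))
    (horth : ∀ i j i' j', (i, j) ≠ (i', j') → ⟪v i j, v i' j'⟫_ℝ = 0)
    (c : ℝ) (hc : ∀ i j, ‖v i j‖ = c)
    : ∀ i j, ⟪u i, u' j⟫_ℝ = 0 := by
  intro i j
  have hl0 : (l : ℝ) ≠ 0 := by positivity
  have hl'0 : (l' : ℝ) ≠ 0 := by positivity
  have hpair : ∀ i₁ j₁ i₂ j₂, ⟪v i₁ j₁, v i₂ j₂⟫_ℝ =
      if i₁ = i₂ then (if j₁ = j₂ then c ^ 2 else 0) else 0 := by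
    intro i₁ j₁ i₂ j₂
    by_cases h1 : i₁ = i₂
    · by_cases h2 : j₁ = j₂
      · subst h1; subst h2
        rw [if_pos rfl, if_pos rfl, real_inner_self_eq_norm_sq, hc]
      · rw [if_pos h1, if_neg h2]
        exact horth _ _ _ _ (by simp [Prod.ext_iff]; tauto)
    · rw [if_neg h1]
      exact horth _ _ _ _ (by simp [Prod.ext_iff]; tauto)
  rw [hu, hu', hvhat, hvhat', hμ]
  simp only [inner_sub_left, inner_sub_right, inner_smul_left, inner_smul_right,
    sum_inner, inner_sum, hpair, RCLike.ofReal_real_eq_id, id_eq,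
    Finset.sum_ite_eq, Finset.sum_ite_eq', Finset.mem_univ, if_true,
    Finset.sum_const, Finset.card_univ, Fintype.card_fin, nsmul_eq_mul]
  field_simp
  simp only [mul_sub, sub_div, Finset.sum_sub_distrib, Finset.sum_add_distrib,
    Finset.sum_div, ite_mul, mul_ite, zero_mul, mul_zero, zero_div,
    Finset.sum_ite_eq, Finset.mem_univ, if_true, Finset.sum_const,
    Finset.card_univ, Fintype.card_fin, nsmul_eq_mul]
  simp [Finset.sum_ite_irrel, Finset.sum_ite_eq, Finset.sum_ite_eq', ite_and]
  field_simp
  ring
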